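/- Let F : ℝⁿ → ℝᵐ satisfy the local tangential cone condition with constant η ∈ [0, 1/2), and suppose x⋆ ∈ ℝⁿ satisfies F(x⋆) = 0. Let δ ∈ (0, 2(1−η)) and let (x_k)_{k≥0} be generated from an initial vector x₀ by x_{k+1} = x_k − δ (‖F_{I_k}(x_k)‖₂² / ‖(F'_{I_k}(x_k))ᵀ F_{I_k}(x_k)‖₂²) (F'_{I_k}(x_k))ᵀ F_{I_k}(x_k), where each I_k ⊆ {1,…,m} is a nonempty index subset such that F'_{I_k}(x_k) has full column rank and (F'_{I_k}(x_k))ᵀ F_{I_k}(x_k) ≠ 0. If there exists κ̄ > 0 such that κ(F'_{I_k}(x_k)) ≤ κ̄ for all k ≥ 0, then ‖x_k − x⋆‖₂² ≤ (1 − (2(1−η)δ − δ²) / ((1+η²) κ̄²))^k ‖x₀ − x⋆‖₂² for all k ≥ 0; in particular x_k converges to x⋆. -/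

import Mathlib

open Matrix
open RealInnerProductSpace

/-- The singular values of a real matrix `A`: square roots of the eigenvalues of `AᵀA`. -/
noncomputable def singVals {m' : Type*} [Fintype m'] {n : ℕ}
    (A : Matrix m' (Fin n) ℝ) : Fin n → ℝ :=
  fun j => Real.sqrt ((Matrix.isHermitian_conjTranspose_mul_self A).eigenvalues j)

/-- The largest singular value of `A`. -/
noncomputable def sigmaMax {m' : Type*} [Fintype m'] {n : ℕ}
    (A : Matrix m' (Fin n) ℝ) : ℝ :=
  ⨆ j, singVals A j

/-- The smallest singular value of `A`. -/
noncomputable def sigmaMin {m' : Type*} [Fintype m'] {n : ℕ}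
    (A : Matrix m' (Fin n) ℝ) : ℝ :=
  ⨅ j, singVals A j

/-- The condition number `κ(A) = σ_max(A) / σ_min(A)`. -/
noncomputable def kappa {m' : Type*} [Fintype m'] {n : ℕ}
    (A : Matrix m' (Fin n) ℝ) : ℝ :=
  sigmaMax A / sigmaMin A


set_option maxHeartbeats 1000000

section Ray
variable {m' : Type*} [Fintype m'] {n : ℕ} (A : Matrix m' (Fin n) ℝ)

lemma enorm_sq {n : ℕ} (v : EuclideanSpace ℝ (Fin n)) : ‖v‖ ^ 2 = ∑ j, v j ^ 2 := by
  rw [EuclideanSpace.norm_eq, Real.sq_sqrt (by positivity)]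
  simp [sq_abs]

lemma pilp_sum_apply {ι : Type*} {n : ℕ} (s : Finset ι) (f : ι → EuclideanSpace ℝ (Fin n))
    (j : Fin n) : (∑ i ∈ s, f i) j = ∑ i ∈ s, f i j := by
  induction s using Finset.cons_induction with
  | empty => rfl
  | cons a s ha ih => rw [Finset.sum_cons, Finset.sum_cons, PiLp.add_apply, ih]

lemma quad_eq (v : EuclideanSpace ℝ (Fin n)) :
    ∑ i, (A *ᵥ v) i ^ 2
      = ∑ j, (Matrix.isHermitian_conjTranspose_mul_self A).eigenvalues j *
          ((Matrix.isHermitian_conjTranspose_mul_self A).eigenvectorBasis.repr v j) ^ 2 := by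
  set hB := Matrix.isHermitian_conjTranspose_mul_self A with hBdef
  set u := hB.eigenvectorBasis with hudef
  have hsum := u.sum_repr v
  have heig : ∀ j, (Aᴴ * A) *ᵥ (u j : Fin n → ℝ) = hB.eigenvalues j • (u j : Fin n → ℝ) :=
    fun j => hB.mulVec_eigenvectorBasis j
  have key : (Aᴴ * A) *ᵥ (v : Fin n → ℝ)
      = ∑ j, (hB.eigenvalues j * u.repr v j) • (u j : Fin n → ℝ) := by
    conv_lhs => rw [← hsum]
    simp only [WithLp.ofLp_sum, WithLp.ofLp_smul]
    rw [show ((Aᴴ * A) *ᵥ ∑ j, u.repr v j • (u j : Fin n → ℝ))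
        = (Aᴴ * A).mulVecLin (∑ j, u.repr v j • (u j : Fin n → ℝ)) from rfl]
    rw [map_sum]
    refine Finset.sum_congr rfl fun j _ => ?_
    rw [LinearMap.map_smul, mulVecLin_apply, heig, smul_smul, mul_comm]
  have hdot : ∀ j, (v : Fin n → ℝ) ⬝ᵥ (u j : Fin n → ℝ) = u.repr v j := by
    intro j
    rw [u.repr_apply_apply]
    simp [dotProduct, PiLp.inner_apply, RCLike.inner_apply, mul_comm]
  calc ∑ i, (A *ᵥ v) i ^ 2 = (A *ᵥ v) ⬝ᵥ (A *ᵥ v) := by simp [dotProduct, sq]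
    _ = (v : Fin n → ℝ) ⬝ᵥ ((Aᴴ * A) *ᵥ v) := by
        rw [← mulVec_mulVec]
        conv_rhs => rw [dotProduct_mulVec, vecMul_conjTranspose]
        simp
    _ = ∑ j, (hB.eigenvalues j * u.repr v j) * ((v : Fin n → ℝ) ⬝ᵥ (u j : Fin n → ℝ)) := by
        rw [key]
        simp only [dotProduct, Finset.sum_apply, pilp_sum_apply, Pi.smul_apply, PiLp.smul_apply, smul_eq_mul, Finset.mul_sum]
        rw [Finset.sum_comm]
        exact Finset.sum_congr rfl fun j _ => Finset.sum_congr rfl fun i _ => by ring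
    _ = ∑ j, hB.eigenvalues j * (u.repr v j) ^ 2 := by
        refine Finset.sum_congr rfl fun j _ => ?_
        rw [hdot]; ring

lemma repr_sq_sum (v : EuclideanSpace ℝ (Fin n)) :
    ∑ j, ((Matrix.isHermitian_conjTranspose_mul_self A).eigenvectorBasis.repr v j) ^ 2
      = ∑ j, v j ^ 2 := by
  have h : ‖(Matrix.isHermitian_conjTranspose_mul_self A).eigenvectorBasis.repr v‖ = ‖v‖ :=
    (Matrix.isHermitian_conjTranspose_mul_self A).eigenvectorBasis.repr.norm_map v
  calc ∑ j, ((Matrix.isHermitian_conjTranspose_mul_self A).eigenvectorBasis.repr v j) ^ 2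
      = ‖(Matrix.isHermitian_conjTranspose_mul_self A).eigenvectorBasis.repr v‖ ^ 2 :=
        (enorm_sq _).symm
    _ = ‖v‖ ^ 2 := by rw [h]
    _ = ∑ j, v j ^ 2 := enorm_sq v

lemma sigmaMin_nonneg : 0 ≤ sigmaMin A := by
  rcases Nat.eq_zero_or_pos n with h | h
  · subst h; simp [sigmaMin, Real.iInf_of_isEmpty]
  · have : Nonempty (Fin n) := Fin.pos_iff_nonempty.mp h
    exact le_ciInf fun j => Real.sqrt_nonneg _

lemma sigmaMin_sq_le (j : Fin n) :
    sigmaMin A ^ 2 ≤ (Matrix.isHermitian_conjTranspose_mul_self A).eigenvalues j := by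
  have h1 : sigmaMin A ≤ singVals A j := ciInf_le (Finite.bddBelow_range _) j
  have h2 : 0 ≤ sigmaMin A := sigmaMin_nonneg A
  calc sigmaMin A ^ 2 ≤ singVals A j ^ 2 := by nlinarith
    _ = _ := Real.sq_sqrt (Matrix.eigenvalues_conjTranspose_mul_self_nonneg A j)

lemma le_sigmaMax_sq (j : Fin n) :
    (Matrix.isHermitian_conjTranspose_mul_self A).eigenvalues j ≤ sigmaMax A ^ 2 := by
  have h1 : singVals A j ≤ sigmaMax A := le_ciSup (Finite.bddAbove_range _) j
  have h2 : 0 ≤ singVals A j := Real.sqrt_nonneg _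
  calc (Matrix.isHermitian_conjTranspose_mul_self A).eigenvalues j = singVals A j ^ 2 :=
        (Real.sq_sqrt (Matrix.eigenvalues_conjTranspose_mul_self_nonneg A j)).symm
    _ ≤ sigmaMax A ^ 2 := by nlinarith

lemma rayleigh_lower (v : EuclideanSpace ℝ (Fin n)) :
    sigmaMin A ^ 2 * ∑ j, v j ^ 2 ≤ ∑ i, (A *ᵥ v) i ^ 2 := by
  rw [quad_eq, ← repr_sq_sum A v, Finset.mul_sum]
  exact Finset.sum_le_sum fun j _ => by
    have := sigmaMin_sq_le A j
    nlinarith [sq_nonneg ((Matrix.isHermitian_conjTranspose_mul_self A).eigenvectorBasis.repr v j)]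

lemma rayleigh_upper (v : EuclideanSpace ℝ (Fin n)) :
    ∑ i, (A *ᵥ v) i ^ 2 ≤ sigmaMax A ^ 2 * ∑ j, v j ^ 2 := by
  rw [quad_eq, ← repr_sq_sum A v, Finset.mul_sum]
  exact Finset.sum_le_sum fun j _ => by
    have := le_sigmaMax_sq A j
    nlinarith [sq_nonneg ((Matrix.isHermitian_conjTranspose_mul_self A).eigenvectorBasis.repr v j)]

end Ray

section Ray2
variable {m' : Type*} [Fintype m'] {n : ℕ} (A : Matrix m' (Fin n) ℝ)

lemma ker_eq_bot_of_rank (h : A.rank = n) : LinearMap.ker A.mulVecLin = ⊥ := by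
  have h1 := A.mulVecLin.finrank_range_add_finrank_ker
  have h2 : Module.finrank ℝ ((Fin n) → ℝ) = n := Module.finrank_fin_fun ℝ
  have h3 : Matrix.rank A = Module.finrank ℝ (LinearMap.range A.mulVecLin) := rfl
  have h4 : Module.finrank ℝ (LinearMap.ker A.mulVecLin) = 0 := by omega
  exact Submodule.finrank_eq_zero.mp h4

lemma eig_pos (h : A.rank = n) (j : Fin n) :
    0 < (Matrix.isHermitian_conjTranspose_mul_self A).eigenvalues j := by
  rcases (Matrix.eigenvalues_conjTranspose_mul_self_nonneg A j).lt_or_eq with hp | hz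
  · exact hp
  · exfalso
    set hB := Matrix.isHermitian_conjTranspose_mul_self A
    set u := hB.eigenvectorBasis with hudef
    have hq := quad_eq A (u j)
    rw [u.repr_self] at hq
    have hsingle : ∑ j', hB.eigenvalues j' * ((EuclideanSpace.single j (1:ℝ)) j') ^ 2
        = hB.eigenvalues j := by
      rw [Finset.sum_eq_single j]
      · simp
      · intro j' _ hne; simp [EuclideanSpace.single_apply, hne]
      · simp
    rw [hsingle, ← hz] at hq
    have hzero : A *ᵥ (u j : Fin n → ℝ) = 0 := by
      funext i
      have h5 := (Finset.sum_eq_zero_iff_of_nonneg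
        (fun i _ => sq_nonneg ((A *ᵥ (u j : Fin n → ℝ)) i))).mp hq i (Finset.mem_univ i)
      exact pow_eq_zero_iff two_ne_zero |>.mp h5
    have hmem : (u j : Fin n → ℝ) ∈ LinearMap.ker A.mulVecLin := hzero
    rw [ker_eq_bot_of_rank A h, Submodule.mem_bot] at hmem
    exact u.orthonormal.ne_zero j (by simpa using hmem)

lemma sigmaMin_pos (hn : 0 < n) (h : A.rank = n) : 0 < sigmaMin A := by
  have : Nonempty (Fin n) := Fin.pos_iff_nonempty.mp hn
  obtain ⟨j0, hj0⟩ := Finite.exists_min (singVals A)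
  exact lt_of_lt_of_le (Real.sqrt_pos.mpr (eig_pos A h j0)) (le_ciInf hj0)

lemma one_le_kappa (hn : 0 < n) (h : A.rank = n) : 1 ≤ kappa A := by
  have : Nonempty (Fin n) := Fin.pos_iff_nonempty.mp hn
  have hmin : 0 < sigmaMin A := sigmaMin_pos A hn h
  have hle : sigmaMin A ≤ sigmaMax A := by
    obtain ⟨j⟩ := ‹Nonempty (Fin n)›
    exact le_trans (ciInf_le (Finite.bddBelow_range _) j) (le_ciSup (Finite.bddAbove_range _) j)
  exact (one_le_div hmin).mpr hle

lemma transpose_bound (w : m' → ℝ) :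
    ∑ j, ((Aᵀ *ᵥ w) j) ^ 2 ≤ sigmaMax A ^ 2 * ∑ i, w i ^ 2 := by
  set t := ∑ j, ((Aᵀ *ᵥ w) j) ^ 2 with ht
  have ht0 : 0 ≤ t := Finset.sum_nonneg fun _ _ => sq_nonneg _
  have hw0 : 0 ≤ ∑ i, w i ^ 2 := Finset.sum_nonneg fun _ _ => sq_nonneg _
  have hid : t = ∑ i, (A *ᵥ (Aᵀ *ᵥ w)) i * w i := by
    have : t = (Aᵀ *ᵥ w) ⬝ᵥ (Aᵀ *ᵥ w) := by simp [ht, dotProduct, sq]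
    rw [this, dotProduct_mulVec, vecMul_transpose]
    rfl
  have hcs : t ^ 2 ≤ (∑ i, (A *ᵥ (Aᵀ *ᵥ w)) i ^ 2) * ∑ i, w i ^ 2 := by
    rw [hid]; exact Finset.sum_mul_sq_le_sq_mul_sq _ _ _
  have hupper : ∑ i, (A *ᵥ (Aᵀ *ᵥ w)) i ^ 2 ≤ sigmaMax A ^ 2 * t :=
    rayleigh_upper A (WithLp.toLp 2 (Aᵀ *ᵥ w))
  rcases ht0.eq_or_lt with hz | hp
  · rw [← hz]; positivity
  · nlinarith

end Ray2


lemma rho_le_one_aux (η δ κbar : ℝ) (hη0 : 0 ≤ η) (hη : η < 1/2) (hδ0 : 0 < δ)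
    (hδ2 : δ < 2*(1-η)) (hκ1 : 1 ≤ κbar) :
    (2*(1-η)*δ - δ^2) ≤ (1+η^2)*κbar^2 := by
  nlinarith [sq_nonneg (δ - (1-η)), mul_nonneg hη0 (by linarith : (0:ℝ) ≤ 2 - η),
    mul_nonneg (by linarith : (0:ℝ) ≤ κbar - 1) (by linarith : (0:ℝ) ≤ κbar + 1),
    mul_nonneg (mul_nonneg hη0 hη0) (sq_nonneg κbar)]

lemma bnn_aux (η S e : ℝ) (hη0 : 0 ≤ η) (hS : 0 ≤ S) (he : -(η*S) ≤ e) :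
    0 ≤ (1+η^2)*S + 2*e := by
  nlinarith [sq_nonneg (1-η), mul_nonneg (sq_nonneg (1-η)) hS]

lemma core_aux (η δ S e c₀ : ℝ) (hη0 : 0 ≤ η) (hδ0 : 0 < δ) (hS : 0 ≤ S)
    (he : |e| ≤ η*S) (hc₀0 : 0 ≤ c₀) (hc₀2δ : c₀ ≤ 2*δ)
    (hc₀id : c₀*(1+η^2) = 2*(1-η)*δ - δ^2) :
    c₀ * ((1+η^2)*S + 2*e) ≤ 2*δ*(S+e) - δ^2*S := by
  have he1 := (abs_le.mp he).1
  have he2 := (abs_le.mp he).2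
  have hexp : c₀ * ((1+η^2)*S + 2*e) = (2*(1-η)*δ - δ^2)*S + 2*(c₀*e) := by
    calc c₀ * ((1+η^2)*S + 2*e) = (c₀*(1+η^2))*S + 2*(c₀*e) := by ring
      _ = (2*(1-η)*δ - δ^2)*S + 2*(c₀*e) := by rw [hc₀id]
  rw [hexp]
  rcases le_total c₀ δ with hcd | hcd
  · nlinarith [mul_nonneg (sub_nonneg.mpr hcd) (by linarith : (0:ℝ) ≤ e + η*S),
      mul_nonneg hc₀0 (mul_nonneg hη0 hS)]
  · nlinarith [mul_nonneg (sub_nonneg.mpr hcd) (by linarith : (0:ℝ) ≤ η*S - e),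
      mul_nonneg (by linarith : (0:ℝ) ≤ 2*δ - c₀) (mul_nonneg hη0 hS)]


/-- the averaging block nonlinear Kaczmarz method with adaptive stepsize,
`δ ∈ (0, 2(1−η))`, converges: if `κ(F'_{I_k}(x_k)) ≤ κ̄` for all `k`, then
`‖x_k − x⋆‖₂² ≤ (1 − (2(1−η)δ − δ²)/((1+η²) κ̄²))^k ‖x₀ − x⋆‖₂²` and `x_k → x⋆`. -/
theorem abnk_adaptive_stepsize_convergence
    {n m : ℕ}
    (F : Fin m → EuclideanSpace ℝ (Fin n) → ℝ)
    (grad : Fin m → EuclideanSpace ℝ (Fin n) → EuclideanSpace ℝ (Fin n))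
    (η : ℝ) (hη0 : 0 ≤ η) (hη : η < 1 / 2)
    -- F is differentiable with Jacobian whose i-th row is ∇F_i
    (hdiff : ∀ i x, HasGradientAt (F i) (grad i x) x)
    -- local tangential cone condition with constant η
    (hltcc : ∀ i (x₁ x₂ : EuclideanSpace ℝ (Fin n)),
      |F i x₁ - F i x₂ - ∑ j, grad i x₁ j * (x₁ j - x₂ j)| ≤ η * |F i x₁ - F i x₂|)
    (xstar : EuclideanSpace ℝ (Fin n)) (hstar : ∀ i, F i xstar = 0)
    (δ : ℝ) (hδ0 : 0 < δ) (hδ2 : δ < 2 * (1 - η))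
    (x : ℕ → EuclideanSpace ℝ (Fin n))
    (I : ℕ → Finset (Fin m)) (hI : ∀ k, (I k).Nonempty)
    -- the row-submatrices F'_{I_k}(x_k) of the Jacobian
    (J : ∀ k, Matrix {i // i ∈ I k} (Fin n) ℝ)
    (hJdef : ∀ k, J k = Matrix.of fun (i : {i // i ∈ I k}) (j : Fin n) => grad i.1 (x k) j)
    -- each F'_{I_k}(x_k) has full column rank
    (hrank : ∀ k, (J k).rank = n)
    -- g_k = (F'_{I_k}(x_k))ᵀ F_{I_k}(x_k)
    (g : ℕ → EuclideanSpace ℝ (Fin n))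
    (hgdef : ∀ k, g k = ∑ i ∈ I k, F i (x k) • grad i (x k))
    (hg : ∀ k, g k ≠ 0)
    -- x_{k+1} = x_k − δ (‖F_{I_k}(x_k)‖₂² / ‖g_k‖₂²) g_k
    (hupd : ∀ k, x (k + 1)
      = x k - (δ * (∑ i ∈ I k, (F i (x k)) ^ 2) / ‖g k‖ ^ 2) • g k)
    (κbar : ℝ) (hκ0 : 0 < κbar)
    (hκ : ∀ k, kappa (J k) ≤ κbar) :
    (∀ k, ‖x k - xstar‖ ^ 2
        ≤ (1 - (2 * (1 - η) * δ - δ ^ 2) / ((1 + η ^ 2) * κbar ^ 2)) ^ k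
            * ‖x 0 - xstar‖ ^ 2)
      ∧ Filter.Tendsto x Filter.atTop (nhds xstar) := by
    classical
  rcases Nat.eq_zero_or_pos n with hn0 | hn
  · exfalso
    subst hn0
    haveI : Subsingleton (EuclideanSpace ℝ (Fin 0)) :=
      ⟨fun a b => PiLp.ext fun i => i.elim0⟩
    exact hg 0 (Subsingleton.elim _ _)
  set ρ : ℝ := (2 * (1 - η) * δ - δ ^ 2) / ((1 + η ^ 2) * κbar ^ 2) with hρdef
  clear_value ρ
  have hden : (0:ℝ) < (1 + η ^ 2) * κbar ^ 2 := by positivity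
  have hnum : 0 < 2 * (1 - η) * δ - δ ^ 2 := by
    linarith only [mul_pos hδ0 (sub_pos.mpr hδ2)]
  have hρ0 : 0 < ρ := by rw [hρdef]; exact div_pos hnum hden
  have hκ1 : 1 ≤ κbar := le_trans (one_le_kappa (J 0) hn (hrank 0)) (hκ 0)
  have hρ1 : ρ ≤ 1 := by
    rw [hρdef, div_le_one hden]
    exact rho_le_one_aux η δ κbar hη0 hη hδ0 hδ2 hκ1
  have hq0 : (0:ℝ) ≤ 1 - ρ := by linarith
  have hq1 : 1 - ρ < 1 := by linarith
  have step : ∀ k, ‖x (k+1) - xstar‖ ^ 2 ≤ (1 - ρ) * ‖x k - xstar‖ ^ 2 := by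
    intro k
    have hσm0 : 0 < sigmaMin (J k) := sigmaMin_pos (J k) hn (hrank k)
    have hσMκ : sigmaMax (J k) ≤ κbar * sigmaMin (J k) := by
      have := hκ k
      rw [kappa, div_le_iff₀ hσm0] at this
      exact this
    have hσM0 : 0 ≤ sigmaMax (J k) := by
      obtain ⟨j⟩ := Fin.pos_iff_nonempty.mp hn
      have h0 : 0 ≤ singVals (J k) j := Real.sqrt_nonneg _
      exact le_trans h0 (le_ciSup (Finite.bddAbove_range _) j)
    set Fi : Fin m → ℝ := fun i => F i (x k) with hFidef
    clear_value Fi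
    set b : Fin m → ℝ := fun i => ∑ j, grad i (x k) j * (x k j - xstar j) with hbdef
    clear_value b
    set S := ∑ i ∈ I k, F i (x k) ^ 2 with hSdef
    clear_value S
    set G := ‖g k‖ ^ 2 with hGdef
    clear_value G
    have hSnn : 0 ≤ S := by rw [hSdef]; exact Finset.sum_nonneg fun _ _ => sq_nonneg _
    have hG0 : 0 < G := by
      rw [hGdef]
      exact pow_pos (norm_pos_iff.mpr (hg k)) 2
    have hS0 : 0 < S := by
      rcases hSnn.eq_or_lt with hz | h
      · exfalso
        apply hg k
        rw [hgdef k]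
        refine Finset.sum_eq_zero fun i hi => ?_
        have hz' : ∑ i ∈ I k, F i (x k) ^ 2 = 0 := by rw [← hSdef, ← hz]
        have h5 := (Finset.sum_eq_zero_iff_of_nonneg
          (fun i _ => sq_nonneg (F i (x k)))).mp hz' i hi
        rw [pow_eq_zero_iff two_ne_zero |>.mp h5, zero_smul]
      · exact h
    have hb : ∀ i, |Fi i - b i| ≤ η * |Fi i| := by
      intro i
      have h := hltcc i (x k) xstar
      rw [hstar i] at h
      simpa [hFidef, hbdef] using h
    have hgj : ∀ j, g k j = ∑ i ∈ I k, Fi i * grad i (x k) j := by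
      intro j
      rw [hgdef k, pilp_sum_apply]
      exact Finset.sum_congr rfl fun i _ => by simp only [PiLp.smul_apply, smul_eq_mul, hFidef]
    -- G ≤ σM² S
    have hGle : G ≤ sigmaMax (J k) ^ 2 * S := by
      have hcoord : ∀ j, ((J k)ᵀ *ᵥ (fun i : {i // i ∈ I k} => Fi i.1)) j = g k j := by
        intro j
        rw [hgj, ← Finset.sum_coe_sort (I k) (fun i => Fi i * grad i (x k) j)]
        simp only [Matrix.mulVec, dotProduct, Matrix.transpose_apply, hJdef k, Matrix.of_apply]
        exact Finset.sum_congr rfl fun i _ => mul_comm _ _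
      have h3 : ∑ i : {i // i ∈ I k}, (Fi i.1) ^ 2 = S := by
        rw [hSdef, ← Finset.sum_coe_sort (I k) (fun i => F i (x k) ^ 2)]
        simp only [hFidef]
      have h1 : G = ∑ j, (((J k)ᵀ *ᵥ (fun i : {i // i ∈ I k} => Fi i.1)) j) ^ 2 := by
        rw [hGdef, enorm_sq (g k)]
        exact (Finset.sum_congr rfl fun j _ => by rw [hcoord]).symm
      rw [h1, ← h3]
      exact transpose_bound (J k) _
    -- lower bound
    set D := ‖x k - xstar‖ ^ 2 with hDdef
    clear_value D
    have hDnn : 0 ≤ D := by rw [hDdef]; positivity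
    set B2 := ∑ i ∈ I k, b i ^ 2 with hB2def
    clear_value B2
    have hDle : sigmaMin (J k) ^ 2 * D ≤ B2 := by
      have h1 := rayleigh_lower (J k) (x k - xstar)
      have h2 : ∑ j, (x k - xstar) j ^ 2 = D := by
        rw [hDdef, enorm_sq]
      have h3 : ∑ i : {i // i ∈ I k}, ((J k) *ᵥ (x k - xstar : EuclideanSpace ℝ (Fin n))) i ^ 2
          = B2 := by
        rw [hB2def, ← Finset.sum_coe_sort (I k) (fun i => b i ^ 2)]
        refine Finset.sum_congr rfl fun i _ => ?_
        congr 1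
        simp only [Matrix.mulVec, dotProduct, hJdef k, Matrix.of_apply, hbdef]
        exact Finset.sum_congr rfl fun j _ => by rw [PiLp.sub_apply]
      rw [← h3, ← h2]
      exact h1
    -- sums decompositions
    set e := ∑ i ∈ I k, Fi i * (b i - Fi i) with hedef
    clear_value e
    have habs : |e| ≤ η * S := by
      calc |e| = |∑ i ∈ I k, Fi i * (b i - Fi i)| := by rw [hedef]
        _ ≤ ∑ i ∈ I k, |Fi i * (b i - Fi i)| := Finset.abs_sum_le_sum_abs _ _
        _ ≤ ∑ i ∈ I k, η * F i (x k) ^ 2 := by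
            refine Finset.sum_le_sum fun i _ => ?_
            rw [abs_mul]
            have h := hb i
            rw [abs_sub_comm] at h
            calc |Fi i| * |b i - Fi i| ≤ |Fi i| * (η * |Fi i|) :=
                  mul_le_mul_of_nonneg_left h (abs_nonneg _)
              _ = η * F i (x k) ^ 2 := by simp only [hFidef]; rw [← sq_abs]; ring
        _ = η * S := by rw [hSdef, Finset.mul_sum]
    have hB2le : B2 ≤ (1 + η ^ 2) * S + 2 * e := by
      have hR : ∑ i ∈ I k, (b i - Fi i) ^ 2 ≤ η ^ 2 * S := by
        rw [hSdef, Finset.mul_sum]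
        refine Finset.sum_le_sum fun i _ => ?_
        have h := hb i
        rw [abs_sub_comm] at h
        calc (b i - Fi i) ^ 2 = |b i - Fi i| ^ 2 := (sq_abs _).symm
          _ ≤ (η * |Fi i|) ^ 2 := by
              have := abs_nonneg (b i - Fi i)
              nlinarith
          _ = η ^ 2 * F i (x k) ^ 2 := by simp only [hFidef]; rw [mul_pow, sq_abs]
      have hid : B2 = S + 2 * e + ∑ i ∈ I k, (b i - Fi i) ^ 2 := by
        rw [hB2def, hSdef, hedef, Finset.mul_sum, ← Finset.sum_add_distrib,
          ← Finset.sum_add_distrib]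
        refine Finset.sum_congr rfl fun i _ => ?_
        simp only [hFidef]
        ring
      linarith
    set P := ∑ i ∈ I k, Fi i * b i with hPdef
    clear_value P
    have hPe : P = S + e := by
      rw [hPdef, hSdef, hedef, ← Finset.sum_add_distrib]
      refine Finset.sum_congr rfl fun i _ => ?_
      simp only [hFidef]
      ring
    have hinner : ⟪x k - xstar, g k⟫ = P := by
      rw [hPdef]
      rw [show ⟪x k - xstar, g k⟫ = ∑ j, (x k - xstar) j * g k j from by
        simp [PiLp.inner_apply, RCLike.inner_apply, starRingEnd_apply]
        exact Finset.sum_congr rfl fun j _ => mul_comm _ _]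
      simp_rw [hgj, Finset.mul_sum]
      rw [Finset.sum_comm]
      refine Finset.sum_congr rfl fun i _ => ?_
      rw [hbdef, Finset.mul_sum]
      refine Finset.sum_congr rfl fun j _ => ?_
      rw [PiLp.sub_apply]
      ring
    -- expansion
    set c := δ * S / G with hcdef
    clear_value c
    have hexp : ‖x (k+1) - xstar‖ ^ 2 = D - 2 * c * P + c ^ 2 * G := by
      have hcoef : (δ * (∑ i ∈ I k, F i (x k) ^ 2) / ‖g k‖ ^ 2) = c := by
        rw [hcdef, hSdef, hGdef]
      rw [hupd k, sub_right_comm, hcoef, norm_sub_sq_real, real_inner_smul_right, norm_smul,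
        hinner, ← hDdef]
      rw [Real.norm_eq_abs, mul_pow, sq_abs, ← hGdef]
      ring
    -- the key chain
    set c₀ := (2 * (1 - η) * δ - δ ^ 2) / (1 + η ^ 2) with hc₀def
    clear_value c₀
    have h1η : (0:ℝ) < 1 + η ^ 2 := by positivity
    have hc₀0 : 0 ≤ c₀ := by rw [hc₀def]; exact le_of_lt (div_pos hnum h1η)
    have hc₀2δ : c₀ ≤ 2 * δ := by
      rw [hc₀def, div_le_iff₀ h1η]
      nlinarith [mul_pos hδ0 hδ0, mul_nonneg (mul_nonneg hδ0.le hη0) hη0,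
        mul_nonneg hδ0.le hη0]
    have hc₀id : c₀ * (1 + η ^ 2) = 2 * (1 - η) * δ - δ ^ 2 := by
      rw [hc₀def]; exact div_mul_cancel₀ _ (ne_of_gt h1η)
    have hρκ : ρ * κbar ^ 2 = c₀ := by
      have hκne : κbar ≠ 0 := ne_of_gt hκ0
      have hηne : (1:ℝ) + η ^ 2 ≠ 0 := ne_of_gt h1η
      rw [hρdef, hc₀def]
      field_simp
    have hcore : c₀ * ((1 + η ^ 2) * S + 2 * e) ≤ 2 * δ * (S + e) - δ ^ 2 * S := by
      have := core_aux η δ S e c₀ hη0 hδ0 hSnn (by linarith [habs] : |e| ≤ η*S) hc₀0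
        (by linarith [hc₀2δ] : c₀ ≤ 2*δ) (by linarith [hc₀id] : c₀*(1+η^2) = 2*(1-η)*δ - δ^2)
      linarith only [this]
    have hbnn : 0 ≤ (1 + η ^ 2) * S + 2 * e := by
      have := bnn_aux η S e hη0 hSnn (abs_le.mp habs).1
      linarith only [this]
    have key : ρ * D * G ≤ 2 * δ * S * P - δ ^ 2 * S ^ 2 := by
      have k1 : ρ * D * G ≤ (ρ * D * S) * sigmaMax (J k) ^ 2 := by
        calc ρ * D * G ≤ ρ * D * (sigmaMax (J k) ^ 2 * S) :=
              mul_le_mul_of_nonneg_left hGle (mul_nonneg hρ0.le hDnn)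
          _ = (ρ * D * S) * sigmaMax (J k) ^ 2 := by ring
      have k2 : (ρ * D * S) * sigmaMax (J k) ^ 2
          ≤ (ρ * D * S) * (κbar ^ 2 * sigmaMin (J k) ^ 2) := by
        refine mul_le_mul_of_nonneg_left ?_ (mul_nonneg (mul_nonneg hρ0.le hDnn) hSnn)
        calc sigmaMax (J k) ^ 2 ≤ (κbar * sigmaMin (J k)) ^ 2 := pow_le_pow_left₀ hσM0 hσMκ 2
          _ = κbar ^ 2 * sigmaMin (J k) ^ 2 := by rw [mul_pow]
      have k3 : (ρ * D * S) * (κbar ^ 2 * sigmaMin (J k) ^ 2)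
          = c₀ * (sigmaMin (J k) ^ 2 * D) * S := by
        rw [← hρκ]; ring
      have k4 : c₀ * (sigmaMin (J k) ^ 2 * D) * S ≤ c₀ * ((1 + η ^ 2) * S + 2 * e) * S := by
        refine mul_le_mul_of_nonneg_right ?_ hSnn
        refine mul_le_mul_of_nonneg_left ?_ hc₀0
        linarith
      have k5 : c₀ * ((1 + η ^ 2) * S + 2 * e) * S ≤ (2 * δ * (S + e) - δ ^ 2 * S) * S :=
        mul_le_mul_of_nonneg_right hcore hSnn
      have k6 : (2 * δ * (S + e) - δ ^ 2 * S) * S = 2 * δ * S * P - δ ^ 2 * S ^ 2 := by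
        rw [hPe]; ring
      linarith only [k1, k2, k3, k4, k5, k6]
    have hfin : ρ * D ≤ 2 * c * P - c ^ 2 * G := by
      have hceq : 2 * c * P - c ^ 2 * G = (2 * δ * S * P - δ ^ 2 * S ^ 2) / G := by
        rw [hcdef]
        field_simp
      rw [hceq, le_div_iff₀ hG0]
      exact key
    rw [hexp]
    linarith only [hfin]
  have bound : ∀ k, ‖x k - xstar‖ ^ 2 ≤ (1 - ρ) ^ k * ‖x 0 - xstar‖ ^ 2 := by
    intro k
    induction k with
    | zero => simp
    | succ k ih =>
      calc ‖x (k+1) - xstar‖ ^ 2 ≤ (1 - ρ) * ‖x k - xstar‖ ^ 2 := step k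
        _ ≤ (1 - ρ) * ((1 - ρ) ^ k * ‖x 0 - xstar‖ ^ 2) :=
            mul_le_mul_of_nonneg_left ih hq0
        _ = (1 - ρ) ^ (k+1) * ‖x 0 - xstar‖ ^ 2 := by ring
  refine ⟨bound, ?_⟩
  have hC : Filter.Tendsto (fun k => (1 - ρ) ^ k * ‖x 0 - xstar‖ ^ 2) Filter.atTop (nhds 0) := by
    have := (tendsto_pow_atTop_nhds_zero_of_lt_one hq0 hq1).mul_const (‖x 0 - xstar‖ ^ 2)
    simpa using this
  have hnorm : Filter.Tendsto (fun k => ‖x k - xstar‖) Filter.atTop (nhds 0) := by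
    apply squeeze_zero (fun k => norm_nonneg _)
      (g := fun k => Real.sqrt ((1 - ρ) ^ k * ‖x 0 - xstar‖ ^ 2))
    · intro k
      rw [show ‖x k - xstar‖ = Real.sqrt (‖x k - xstar‖ ^ 2) from
        (Real.sqrt_sq (norm_nonneg _)).symm]
      exact Real.sqrt_le_sqrt (bound k)
    · simpa using hC.sqrt
  exact tendsto_iff_norm_sub_tendsto_zero.mpr hnorm
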